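/- arXiv:2512.10461 — 2 statements merged into one kernel-verified Lean document; each statement's English description precedes it below -/
import Mathlib

section
/- (Theorem 2, pathwise version for orthonormal null space basis.) Let A be a p × n real matrix, b ∈ ℝᵖ, C a q × n real matrix, d ∈ ℝ^q, y₀ ∈ ℝⁿ, and suppose F = {z : Az ≤ b and Cz = d} is nonempty. Let z_proj be the orthogonal projection of y₀ onto {z : Cz = d}, and let N : ℝʳ → ℝⁿ be a linear isometry whose range equals null(C). Suppose all rows of the transformed constraint matrix A∘N are nonzero, let 0 < δ < 2, and let w₀ = 0 with SKM iterates w_{j+1} = T_{ã_{i_j}, b̃_{i_j}, δ}(w_j) on the transformed system (A∘N) w ≤ b − A·z_proj (rows ã_iᵀ, right-hand side b̃ = b − A·z_proj), for any index sequence i₀, …, i_{k−1}, and suppose the transformed feasible set W = {w : (A∘N)w ≤ b̃} is nonempty. Then the recovered point z_k = z_proj + N w_k satisfies ‖z_k − y₀‖ ≤ √5 · infDist(y₀, F). -/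
open Matrix Metric

/-- The SKM update `T_{a,b,δ}(z) = z − δ·max(⟪a,z⟫ − b, 0)/‖a‖² • a`. -/
noncomputable def skmT {r : ℕ} (a : EuclideanSpace ℝ (Fin r)) (b δ : ℝ)
    (z : EuclideanSpace ℝ (Fin r)) : EuclideanSpace ℝ (Fin r) :=
  z - (δ * max ((inner ℝ a z : ℝ) - b) 0 / ‖a‖ ^ 2) • a

lemma skm_nonexp {r : ℕ} (a : EuclideanSpace ℝ (Fin r)) (b δ : ℝ) (ha : a ≠ 0)
    (hδ0 : 0 < δ) (hδ2 : δ < 2) (z ws : EuclideanSpace ℝ (Fin r))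
    (hws : (inner ℝ a ws : ℝ) ≤ b) :
    ‖skmT a b δ z - ws‖ ≤ ‖z - ws‖ := by
  have hna : (0:ℝ) < ‖a‖^2 := by
    have := norm_pos_iff.mpr ha; positivity
  set m : ℝ := max ((inner ℝ a z : ℝ) - b) 0 with hm
  set lam : ℝ := δ * m / ‖a‖^2 with hlam
  have hsub : skmT a b δ z - ws = (z - ws) - lam • a := by
    simp only [skmT, hlam, hm]; abel
  have key : ‖skmT a b δ z - ws‖^2 ≤ ‖z - ws‖^2 := by
    rw [hsub, norm_sub_sq_real]
    have h1 : (inner ℝ (z - ws) (lam • a) : ℝ) = lam * (inner ℝ a (z - ws) : ℝ) := by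
      rw [real_inner_smul_right, real_inner_comm]
    have h2 : ‖lam • a‖^2 = lam^2 * ‖a‖^2 := by
      rw [norm_smul]; simp [mul_pow, sq_abs]
    rw [h1, h2]
    rcases le_or_gt ((inner ℝ a z : ℝ) - b) 0 with h | h
    · have : m = 0 := max_eq_right h
      simp [hlam, this]
    · have hme : m = (inner ℝ a z : ℝ) - b := max_eq_left h.le
      have hinge : m ≤ (inner ℝ a (z - ws) : ℝ) := by
        rw [inner_sub_right]; rw [hme]; linarith
      have hlampos : 0 < lam := by
        rw [hlam]; positivity
      have hlamval : lam * ‖a‖^2 = δ * m := by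
        rw [hlam, div_mul_cancel₀ _ hna.ne']
      nlinarith [mul_le_mul_of_nonneg_left hinge hlampos.le,
        sq_nonneg lam, mul_pos hlampos hna]
  nlinarith [norm_nonneg (skmT a b δ z - ws), norm_nonneg (z - ws)]

set_option maxHeartbeats 1000000 in
/-- Theorem 2, pathwise version (orthonormal null-space basis): running SKM on
the transformed system `(A∘N) w ≤ b − A·z_proj` from `w₀ = 0` and recovering
`z_k = z_proj + N w_k` yields `‖z_k − y₀‖ ≤ √5 · infDist(y₀, F)`. -/
theorem tskm_pathwise_sqrt5_bound
    (p q n r k : ℕ) (A : Matrix (Fin p) (Fin n) ℝ) (b : Fin p → ℝ)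
    (C : Matrix (Fin q) (Fin n) ℝ) (d : Fin q → ℝ)
    (y₀ : EuclideanSpace ℝ (Fin n))
    (F : Set (EuclideanSpace ℝ (Fin n)))
    (hF : F = {z : EuclideanSpace ℝ (Fin n) | (∀ i, A.mulVec z i ≤ b i) ∧ C.mulVec z = d})
    (hFne : F.Nonempty)
    (zproj : EuclideanSpace ℝ (Fin n)) (hzproj_mem : C.mulVec zproj = d)
    (hzproj_min : ∀ z : EuclideanSpace ℝ (Fin n), C.mulVec z = d →
      ‖y₀ - zproj‖ ≤ ‖y₀ - z‖)
    (N : EuclideanSpace ℝ (Fin r) →ₗᵢ[ℝ] EuclideanSpace ℝ (Fin n))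
    (hN : Set.range N = {v : EuclideanSpace ℝ (Fin n) | C.mulVec v = 0})
    -- rows of the transformed constraint matrix `A∘N`
    (atil : Fin p → EuclideanSpace ℝ (Fin r))
    (hatil : ∀ i w, (inner ℝ (atil i) w : ℝ) = A.mulVec (N w) i)
    (hatil_ne : ∀ i, atil i ≠ 0)
    (btil : Fin p → ℝ) (hbtil : ∀ i, btil i = b i - A.mulVec zproj i)
    (hWne : {w : EuclideanSpace ℝ (Fin r) | ∀ i, (inner ℝ (atil i) w : ℝ) ≤ btil i}.Nonempty)
    (δ : ℝ) (hδ0 : 0 < δ) (hδ2 : δ < 2)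
    (idx : ℕ → Fin p)
    (w : ℕ → EuclideanSpace ℝ (Fin r)) (hw0 : w 0 = 0)
    (hstep : ∀ j < k, w (j + 1) = skmT (atil (idx j)) (btil (idx j)) δ (w j)) :
    ‖(zproj + N (w k)) - y₀‖ ≤ Real.sqrt 5 * infDist y₀ F := by
  have sqrt5_pos : (0:ℝ) < Real.sqrt 5 := Real.sqrt_pos.mpr (by norm_num)
  have sqrt5_sq : Real.sqrt 5 ^ 2 = 5 := Real.sq_sqrt (by norm_num)
  -- orthogonality: y₀ - zproj ⟂ range N
  have horth : ∀ u : EuclideanSpace ℝ (Fin r), (inner ℝ (y₀ - zproj) (N u) : ℝ) = 0 := by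
    intro u
    set v : EuclideanSpace ℝ (Fin n) := N u with hv
    have hCv : C.mulVec v = 0 := by
      have : v ∈ Set.range N := ⟨u, rfl⟩
      rw [hN] at this; exact this
    set c : ℝ := (inner ℝ (y₀ - zproj) v : ℝ) with hc
    have hquad : ∀ t : ℝ, 2 * (t * c) ≤ t^2 * ‖v‖^2 := by
      intro t
      have hmem : C.mulVec (zproj + t • v) = d := by
        have : C.mulVec (zproj + t • v) = C.mulVec zproj + t • C.mulVec v := by
          rw [Matrix.mulVec_add, Matrix.mulVec_smul]
        rw [this, hzproj_mem, hCv]; simp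
      have hle := hzproj_min _ hmem
      have hrw : y₀ - (zproj + t • v) = (y₀ - zproj) - t • v := by abel
      have htv : ‖t • v‖^2 = t^2 * ‖v‖^2 := by
        simp [norm_smul, mul_pow, Real.norm_eq_abs, sq_abs]
      have hexp : ‖(y₀ - zproj) - t • v‖^2
          = ‖y₀ - zproj‖^2 - 2 * (t * c) + t^2 * ‖v‖^2 := by
        rw [norm_sub_sq_real, real_inner_smul_right, htv, ← hc]
      have hsq : ‖y₀ - zproj‖^2 ≤ ‖(y₀ - zproj) - t • v‖^2 := by
        rw [← hrw]
        exact pow_le_pow_left₀ (norm_nonneg _) hle 2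
      rw [hexp] at hsq; linarith
    by_cases hv0 : v = 0
    · simp [hc, hv0]
    · have hnv : (0:ℝ) < ‖v‖^2 := by
        have := norm_pos_iff.mpr hv0; positivity
      have hq := hquad (c / ‖v‖^2)
      have hc0 : c = 0 := by
        have h1 : 2 * (c / ‖v‖^2 * c) = 2 * c^2 / ‖v‖^2 := by ring
        have h2 : (c / ‖v‖^2)^2 * ‖v‖^2 = c^2 / ‖v‖^2 := by
          field_simp
        rw [h1, h2] at hq
        have := (div_le_div_iff_of_pos_right hnv).mp hq  -- may need name fix
        nlinarith [sq_nonneg c]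
      rw [hc] at hc0; exact hc0
  -- main bound against an arbitrary feasible point
  have hmain : ∀ zs ∈ F, ‖(zproj + N (w k)) - y₀‖ ≤ Real.sqrt 5 * dist y₀ zs := by
    intro zs hzs
    rw [hF] at hzs
    obtain ⟨hzsA, hzsC⟩ := hzs
    have hCdiff : C.mulVec (zs - zproj) = 0 := by
      rw [Matrix.mulVec_sub, hzsC, hzproj_mem]; simp
    have hmemrange : zs - zproj ∈ Set.range N := by rw [hN]; exact hCdiff
    obtain ⟨ws, hws⟩ := hmemrange
    have hwsW : ∀ i, (inner ℝ (atil i) ws : ℝ) ≤ btil i := by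
      intro i
      rw [hatil, hws, hbtil, WithLp.ofLp_sub, Matrix.mulVec_sub]
      have := hzsA i
      simp only [Pi.sub_apply]
      linarith
    have hiter : ∀ j, j ≤ k → ‖w j - ws‖ ≤ ‖ws‖ := by
      intro j
      induction j with
      | zero => intro _; rw [hw0]; simp
      | succ m ih =>
        intro hj
        have hm : m < k := lt_of_lt_of_le (Nat.lt_succ_self m) hj
        rw [hstep m hm]
        exact le_trans (skm_nonexp _ _ _ (hatil_ne _) hδ0 hδ2 _ _ (hwsW _))
          (ih (le_of_lt hm))
    have hwk : ‖w k‖ ≤ 2 * ‖ws‖ := by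
      have h1 : ‖w k‖ ≤ ‖w k - ws‖ + ‖ws‖ := by
        calc ‖w k‖ = ‖(w k - ws) + ws‖ := by rw [sub_add_cancel]
          _ ≤ ‖w k - ws‖ + ‖ws‖ := norm_add_le _ _
      have := hiter k le_rfl
      linarith
    have hwsnorm : ‖ws‖ = ‖zs - zproj‖ := by rw [← N.norm_map, hws]
    -- Pythagoras for zs
    have hcross1 : (inner ℝ (zs - zproj) (y₀ - zproj) : ℝ) = 0 := by
      rw [real_inner_comm, ← hws]; exact horth ws
    have hdist : ‖zs - y₀‖^2 = ‖zs - zproj‖^2 + ‖y₀ - zproj‖^2 := by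
      have h : zs - y₀ = (zs - zproj) - (y₀ - zproj) := by abel
      rw [h, norm_sub_sq_real, hcross1]; ring
    -- Pythagoras for the iterate
    have hcross2 : (inner ℝ (N (w k)) (y₀ - zproj) : ℝ) = 0 := by
      rw [real_inner_comm]; exact horth (w k)
    have hzk : ‖(zproj + N (w k)) - y₀‖^2 = ‖w k‖^2 + ‖y₀ - zproj‖^2 := by
      have h : (zproj + N (w k)) - y₀ = N (w k) - (y₀ - zproj) := by abel
      rw [h, norm_sub_sq_real, hcross2, N.norm_map]; ring
    have hD : dist y₀ zs = ‖zs - y₀‖ := by rw [dist_eq_norm, norm_sub_rev]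
    rw [hD]
    have hfin : ‖(zproj + N (w k)) - y₀‖^2 ≤ (Real.sqrt 5 * ‖zs - y₀‖)^2 := by
      have hwk2 : ‖w k‖^2 ≤ 4 * ‖ws‖^2 := by
        nlinarith [norm_nonneg (w k), norm_nonneg ws]
      rw [mul_pow, sqrt5_sq, hdist]
      rw [hzk]
      rw [hwsnorm] at hwk2
      nlinarith [sq_nonneg (‖zs - zproj‖), sq_nonneg (‖y₀ - zproj‖)]
    nlinarith [norm_nonneg ((zproj + N (w k)) - y₀),
      mul_nonneg sqrt5_pos.le (norm_nonneg (zs - y₀))]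
  -- pass to the infimum
  have hinf : ‖(zproj + N (w k)) - y₀‖ / Real.sqrt 5 ≤ infDist y₀ F := by
    by_contra hlt
    push_neg at hlt
    obtain ⟨zs, hzsF, hzsd⟩ := (infDist_lt_iff hFne).mp hlt
    have := hmain zs hzsF
    rw [lt_div_iff₀ sqrt5_pos] at hzsd
    nlinarith
  calc ‖(zproj + N (w k)) - y₀‖
      = Real.sqrt 5 * (‖(zproj + N (w k)) - y₀‖ / Real.sqrt 5) := by
        field_simp
    _ ≤ Real.sqrt 5 * infDist y₀ F := by
        exact mul_le_mul_of_nonneg_left hinf sqrt5_pos.le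
end

section
/- (Theorem 2, pathwise version with general condition number.) Let A be a p × n real matrix, b ∈ ℝᵖ, C a q × n real matrix, d ∈ ℝ^q, y₀ ∈ ℝⁿ, and suppose F = {z : Az ≤ b and Cz = d} is nonempty. Let z_proj be the orthogonal projection of y₀ onto {z : Cz = d}. Let N : ℝʳ → ℝⁿ be a linear map with range equal to null(C) and constants 0 < σ₂ ≤ σ₁ such that σ₂‖w‖ ≤ ‖Nw‖ ≤ σ₁‖w‖ for all w ∈ ℝʳ, and set κ = σ₁/σ₂. Suppose all rows of A∘N are nonzero, 0 < δ < 2, the transformed feasible set W = {w : (A∘N)w ≤ b − A·z_proj} is nonempty, and let w_k be the k-th SKM iterate from w₀ = 0 on the system (A∘N)w ≤ b − A·z_proj along any index sequence. Then ‖(z_proj + N w_k) − y₀‖ ≤ √(1 + 4κ²) · infDist(y₀, F). -/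
open Matrix Metric

set_option maxHeartbeats 1000000

lemma skmT_nonexpansive {r : ℕ} (a : EuclideanSpace ℝ (Fin r)) (b δ : ℝ)
    (hδ0 : 0 ≤ δ) (hδ2 : δ ≤ 2) (ha : a ≠ 0) (ws z : EuclideanSpace ℝ (Fin r))
    (hws : (inner ℝ a ws : ℝ) ≤ b) :
    ‖skmT a b δ z - ws‖ ≤ ‖z - ws‖ := by
  have hna : (0:ℝ) < ‖a‖ ^ 2 := pow_pos (norm_pos_iff.mpr ha) 2
  set m : ℝ := max ((inner ℝ a z : ℝ) - b) 0 with hm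
  have hm0 : 0 ≤ m := le_max_right _ _
  set lam : ℝ := δ * m / ‖a‖ ^ 2 with hlam
  have hlam0 : 0 ≤ lam := by positivity
  have heq : skmT a b δ z - ws = (z - ws) - lam • a := by
    simp only [skmT, hlam, hm]
    abel
  have hinner : (inner ℝ a (z - ws) : ℝ) = (inner ℝ a z : ℝ) - (inner ℝ a ws : ℝ) :=
    inner_sub_right a z ws
  have hkey : lam * m ≤ lam * (inner ℝ a (z - ws) : ℝ) := by
    rcases le_or_gt ((inner ℝ a z : ℝ) - b) 0 with h | h
    · have : m = 0 := max_eq_right h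
      have : lam = 0 := by rw [hlam, this]; ring
      simp [this]
    · have hmeq : m = (inner ℝ a z : ℝ) - b := max_eq_left h.le
      have : m ≤ (inner ℝ a (z - ws) : ℝ) := by rw [hinner, hmeq]; linarith
      exact mul_le_mul_of_nonneg_left this hlam0
  have hsq : ‖skmT a b δ z - ws‖ ^ 2 ≤ ‖z - ws‖ ^ 2 := by
    rw [heq, norm_sub_sq_real, norm_smul, real_inner_smul_right,
      Real.norm_eq_abs, abs_of_nonneg hlam0]
    have hexp : (lam * ‖a‖) ^ 2 = lam ^ 2 * ‖a‖ ^ 2 := by ring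
    rw [hexp]
    have h1 : lam ^ 2 * ‖a‖ ^ 2 = δ ^ 2 * m ^ 2 / ‖a‖ ^ 2 := by
      rw [hlam]; field_simp
    have h2 : lam * m = δ * m ^ 2 / ‖a‖ ^ 2 := by
      rw [hlam]; field_simp
    have hrest : lam ^ 2 * ‖a‖ ^ 2 ≤ 2 * (lam * m) := by
      rw [h1, h2, div_le_iff₀ hna]
      have he : 2 * (δ * m ^ 2 / ‖a‖ ^ 2) * ‖a‖ ^ 2 = 2 * δ * m ^ 2 := by
        field_simp
      rw [he]
      nlinarith [mul_nonneg (mul_nonneg hδ0 (by linarith : (0:ℝ) ≤ 2 - δ))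
        (sq_nonneg m)]
    have hcomm : (inner ℝ (z - ws) a : ℝ) = (inner ℝ a (z - ws) : ℝ) :=
      real_inner_comm _ _
    rw [hcomm]
    nlinarith [hkey, hrest]
  have := Real.sqrt_le_sqrt hsq
  rwa [Real.sqrt_sq (norm_nonneg _), Real.sqrt_sq (norm_nonneg _)] at this

/-- Theorem 2, pathwise version with general condition number: if
`σ₂‖w‖ ≤ ‖Nw‖ ≤ σ₁‖w‖` and `κ = σ₁/σ₂`, then the recovered point
`z_proj + N w_k` satisfies `‖(z_proj + N w_k) − y₀‖ ≤ √(1 + 4κ²)·infDist(y₀, F)`. -/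
theorem tskm_pathwise_condition_number_bound
    (p q n r k : ℕ) (A : Matrix (Fin p) (Fin n) ℝ) (b : Fin p → ℝ)
    (C : Matrix (Fin q) (Fin n) ℝ) (d : Fin q → ℝ)
    (y₀ : EuclideanSpace ℝ (Fin n))
    (F : Set (EuclideanSpace ℝ (Fin n)))
    (hF : F = {z : EuclideanSpace ℝ (Fin n) | (∀ i, A.mulVec z i ≤ b i) ∧ C.mulVec z = d})
    (hFne : F.Nonempty)
    (zproj : EuclideanSpace ℝ (Fin n)) (hzproj_mem : C.mulVec zproj = d)
    (hzproj_min : ∀ z : EuclideanSpace ℝ (Fin n), C.mulVec z = d →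
      ‖y₀ - zproj‖ ≤ ‖y₀ - z‖)
    (N : EuclideanSpace ℝ (Fin r) →ₗ[ℝ] EuclideanSpace ℝ (Fin n))
    (hN : Set.range N = {v : EuclideanSpace ℝ (Fin n) | C.mulVec v = 0})
    (σ₁ σ₂ : ℝ) (hσ₂ : 0 < σ₂) (hσ : σ₂ ≤ σ₁)
    (hNlow : ∀ w, σ₂ * ‖w‖ ≤ ‖N w‖) (hNup : ∀ w, ‖N w‖ ≤ σ₁ * ‖w‖)
    (κ : ℝ) (hκ : κ = σ₁ / σ₂)
    -- rows of the transformed constraint matrix `A∘N`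
    (atil : Fin p → EuclideanSpace ℝ (Fin r))
    (hatil : ∀ i w, (inner ℝ (atil i) w : ℝ) = A.mulVec (N w) i)
    (hatil_ne : ∀ i, atil i ≠ 0)
    (btil : Fin p → ℝ) (hbtil : ∀ i, btil i = b i - A.mulVec zproj i)
    (hWne : {w : EuclideanSpace ℝ (Fin r) | ∀ i, (inner ℝ (atil i) w : ℝ) ≤ btil i}.Nonempty)
    (δ : ℝ) (hδ0 : 0 < δ) (hδ2 : δ < 2)
    (idx : ℕ → Fin p)
    (w : ℕ → EuclideanSpace ℝ (Fin r)) (hw0 : w 0 = 0)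
    (hstep : ∀ j < k, w (j + 1) = skmT (atil (idx j)) (btil (idx j)) δ (w j)) :
    ‖(zproj + N (w k)) - y₀‖ ≤ Real.sqrt (1 + 4 * κ ^ 2) * infDist y₀ F := by
  have hκ1 : 1 ≤ κ := by
    rw [hκ]; rw [le_div_iff₀ hσ₂]; linarith
  have hκ0 : 0 < κ := lt_of_lt_of_le one_pos hκ1
  set c : ℝ := Real.sqrt (1 + 4 * κ ^ 2) with hc
  have hc0 : 0 < c := Real.sqrt_pos.mpr (by nlinarith)
  -- orthogonality of y₀ - zproj to null C
  have horth : ∀ v : EuclideanSpace ℝ (Fin n), C.mulVec v = 0 →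
      (inner ℝ (y₀ - zproj) v : ℝ) = 0 := by
    intro v hv
    by_cases hv0 : v = 0
    · simp [hv0]
    have hv2 : (0:ℝ) < ‖v‖ ^ 2 := pow_pos (norm_pos_iff.mpr hv0) 2
    set ι : ℝ := (inner ℝ (y₀ - zproj) v : ℝ) with hι
    set t : ℝ := ι / ‖v‖ ^ 2 with ht
    have hmem : C.mulVec ((zproj + t • v : EuclideanSpace ℝ (Fin n))) = d := by
      have : C.mulVec ((zproj + t • v : EuclideanSpace ℝ (Fin n)))
          = C.mulVec zproj + t • C.mulVec v := by
        rw [WithLp.ofLp_add, WithLp.ofLp_smul, Matrix.mulVec_add, Matrix.mulVec_smul]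
      rw [this, hv, hzproj_mem]; simp
    have h := hzproj_min _ hmem
    have hrw : y₀ - (zproj + t • v) = (y₀ - zproj) - t • v := by abel
    rw [hrw] at h
    have hsq := pow_le_pow_left₀ (norm_nonneg _) h 2
    have hexp : ‖(y₀ - zproj) - t • v‖ ^ 2
        = ‖y₀ - zproj‖ ^ 2 - 2 * (t * ι) + t ^ 2 * ‖v‖ ^ 2 := by
      rw [norm_sub_sq_real, real_inner_smul_right, norm_smul,
        Real.norm_eq_abs]
      have : (|t| * ‖v‖) ^ 2 = t ^ 2 * ‖v‖ ^ 2 := by rw [mul_pow, sq_abs]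
      rw [this, hι]
    rw [hexp] at hsq
    have hts : t * ι = ι ^ 2 / ‖v‖ ^ 2 := by rw [ht]; field_simp
    have hts2 : t ^ 2 * ‖v‖ ^ 2 = ι ^ 2 / ‖v‖ ^ 2 := by
      rw [ht]; field_simp
    rw [hts, hts2] at hsq
    have : ι ^ 2 / ‖v‖ ^ 2 ≤ 0 := by linarith
    have hι2 : ι ^ 2 ≤ 0 := by
      rw [div_nonpos_iff] at this
      rcases this with ⟨h1, h2⟩ | ⟨h1, h2⟩
      · nlinarith
      · exact h1
    nlinarith [sq_nonneg ι]
  -- pointwise bound against any feasible point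
  have hbound : ∀ z ∈ F, ‖(zproj + N (w k)) - y₀‖ ≤ c * dist y₀ z := by
    intro z hz
    rw [hF] at hz
    obtain ⟨hzA, hzC⟩ := hz
    have hnull : C.mulVec ((z - zproj : EuclideanSpace ℝ (Fin n))) = 0 := by
      rw [WithLp.ofLp_sub, Matrix.mulVec_sub, hzC, hzproj_mem, sub_self]
    have hmemrange : (z - zproj : EuclideanSpace ℝ (Fin n)) ∈ Set.range N := by
      rw [hN]; exact hnull
    obtain ⟨ws, hws⟩ := hmemrange
    -- ws is feasible for the transformed system
    have hwsW : ∀ i, (inner ℝ (atil i) ws : ℝ) ≤ btil i := by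
      intro i
      rw [hatil, hws, hbtil]
      have : A.mulVec ((z - zproj : EuclideanSpace ℝ (Fin n))) i
          = A.mulVec z i - A.mulVec zproj i := by
        rw [WithLp.ofLp_sub, Matrix.mulVec_sub]; rfl
      rw [this]
      have := hzA i
      linarith
    -- iterates stay within ‖ws‖ of ws
    have hiter : ∀ j, j ≤ k → ‖w j - ws‖ ≤ ‖ws‖ := by
      intro j
      induction j with
      | zero => intro _; rw [hw0]; simp
      | succ j ih =>
        intro hj
        rw [hstep j (by omega)]
        exact le_trans
          (skmT_nonexpansive _ _ _ hδ0.le hδ2.le (hatil_ne _) ws (w j)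
            (hwsW (idx j)))
          (ih (by omega))
    have hwk : ‖w k‖ ≤ 2 * ‖ws‖ := by
      calc ‖w k‖ = ‖(w k - ws) + ws‖ := by rw [sub_add_cancel]
        _ ≤ ‖w k - ws‖ + ‖ws‖ := norm_add_le _ _
        _ ≤ ‖ws‖ + ‖ws‖ := by linarith [hiter k le_rfl]
        _ = 2 * ‖ws‖ := by ring
    set X : ℝ := ‖y₀ - zproj‖ with hX
    set Y : ℝ := ‖(z - zproj : EuclideanSpace ℝ (Fin n))‖ with hY
    have hX0 : 0 ≤ X := norm_nonneg _
    have hY0 : 0 ≤ Y := norm_nonneg _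
    have hwsY : σ₂ * ‖ws‖ ≤ Y := by
      have := hNlow ws
      rw [hws] at this
      exact this
    have hNwk : ‖N (w k)‖ ≤ 2 * κ * Y := by
      have h1 : ‖N (w k)‖ ≤ σ₁ * ‖w k‖ := hNup _
      have h2 : σ₁ * ‖w k‖ ≤ σ₁ * (2 * ‖ws‖) :=
        mul_le_mul_of_nonneg_left hwk (by linarith)
      have h3 : σ₁ = κ * σ₂ := by rw [hκ]; field_simp
      have h4 : σ₁ * (2 * ‖ws‖) = 2 * κ * (σ₂ * ‖ws‖) := by rw [h3]; ring
      have h5 : 2 * κ * (σ₂ * ‖ws‖) ≤ 2 * κ * Y :=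
        mul_le_mul_of_nonneg_left hwsY (by positivity)
      linarith
    -- Pythagoras
    have hpyth : ‖y₀ - z‖ ^ 2 = X ^ 2 + Y ^ 2 := by
      have hrw : y₀ - z = (y₀ - zproj) - (z - zproj) := by abel
      rw [hrw, norm_sub_sq_real, horth _ hnull]
      ring
    have hLHS : ‖(zproj + N (w k)) - y₀‖ ≤ X + 2 * κ * Y := by
      have hrw : (zproj + N (w k)) - y₀ = (zproj - y₀) + N (w k) := by abel
      calc ‖(zproj + N (w k)) - y₀‖ = ‖(zproj - y₀) + N (w k)‖ := by rw [hrw]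
        _ ≤ ‖zproj - y₀‖ + ‖N (w k)‖ := norm_add_le _ _
        _ = X + ‖N (w k)‖ := by rw [norm_sub_rev]
        _ ≤ X + 2 * κ * Y := by linarith
    have hCS : X + 2 * κ * Y ≤ c * ‖y₀ - z‖ := by
      have hsq : (X + 2 * κ * Y) ^ 2 ≤ (1 + 4 * κ ^ 2) * ‖y₀ - z‖ ^ 2 := by
        rw [hpyth]
        nlinarith [sq_nonneg (2 * κ * X - Y)]
      have h1 : X + 2 * κ * Y = Real.sqrt ((X + 2 * κ * Y) ^ 2) :=
        (Real.sqrt_sq (by positivity)).symm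
      rw [h1, hc]
      calc Real.sqrt ((X + 2 * κ * Y) ^ 2)
          ≤ Real.sqrt ((1 + 4 * κ ^ 2) * ‖y₀ - z‖ ^ 2) := Real.sqrt_le_sqrt hsq
        _ = Real.sqrt (1 + 4 * κ ^ 2) * ‖y₀ - z‖ := by
            rw [Real.sqrt_mul (by nlinarith), Real.sqrt_sq (norm_nonneg _)]
    rw [dist_eq_norm]
    linarith
  -- conclude via infDist
  by_contra hcon
  push_neg at hcon
  have hlt : infDist y₀ F < ‖(zproj + N (w k)) - y₀‖ / c := by
    rw [lt_div_iff₀ hc0]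
    calc infDist y₀ F * c = c * infDist y₀ F := mul_comm _ _
      _ < _ := hcon
  obtain ⟨z, hzF, hzd⟩ := (infDist_lt_iff hFne).mp hlt
  have := hbound z hzF
  rw [lt_div_iff₀ hc0] at hzd
  nlinarith [hc0]
end
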